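/- Let H ⊆ [p]^n with Natarajan dimension d_N and finite exponential dimension d_E, where p ≥ 2. Then d_E ≤ 5·d_N·log₂(p). -/

import Mathlib

open Finset

/-- The edge of the one-inclusion graph of `H ⊆ [p]^n` in direction `i` through `g`:
all members of `H` agreeing with `g` off coordinate `i`. -/
def edgeF {n p : ℕ} (H : Finset (Fin n → Fin p)) (i : Fin n) (g : Fin n → Fin p) :
    Finset (Fin n → Fin p) :=
  H.filter (fun h => ∀ j, j ≠ i → h j = g j)

/-- The shifting operator in direction `i`: each edge is pushed downward, i.e. replaced by
the words agreeing with its pattern off `i` whose `i`-th coordinate is among the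
`|e|` smallest values. -/
def shift {n p : ℕ} (i : Fin n) (H : Finset (Fin n → Fin p)) : Finset (Fin n → Fin p) :=
  Finset.univ.filter (fun g => (g i).val < (edgeF H i g).card)

/-- The projection of `H` to a sequence `S` of coordinates. -/
def projF {n p k : ℕ} (H : Finset (Fin n → Fin p)) (S : Fin k → Fin n) :
    Finset (Fin k → Fin p) :=
  H.image (fun h => fun j => h (S j))

/-- `H` E-shatters size `k` if some sequence of `k` coordinates has projection of size `≥ 2^k`. -/
def EShatters {n p : ℕ} (H : Finset (Fin n → Fin p)) (k : ℕ) : Prop :=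
  ∃ S : Fin k → Fin n, 2 ^ k ≤ (projF H S).card

/-- The exponential dimension: the largest `k` that `H` E-shatters. -/
noncomputable def dE {n p : ℕ} (H : Finset (Fin n → Fin p)) : ℕ :=
  sSup {k | EShatters H k}

/-- The number of edges of the one-inclusion graph of `H` in direction `j`
(equivalently, the number of distinct patterns of `H` off coordinate `j`). -/
def numEdges {n p : ℕ} (H : Finset (Fin n → Fin p)) (j : Fin n) : ℕ :=
  (H.image (fun h => fun k : {k : Fin n // k ≠ j} => h k.1)).card

/-- `avd'(H) = (1/|H|) Σ_{e ∈ E} (|e| − 1)`, over all edges including singletons. -/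
def avd' {n p : ℕ} (H : Finset (Fin n → Fin p)) : ℚ :=
  (∑ j : Fin n, ((H.card : ℚ) - (numEdges H j : ℚ))) / (H.card : ℚ)

/-- The degree of `v`: the number of non-singleton edges of the one-inclusion graph
containing `v`. -/
def deg {n p : ℕ} (H : Finset (Fin n → Fin p)) (v : Fin n → Fin p) : ℕ :=
  (Finset.univ.filter (fun j : Fin n => 2 ≤ (edgeF H j v).card)).card

/-- The average degree of the one-inclusion graph of `H`. -/
def avd {n p : ℕ} (H : Finset (Fin n → Fin p)) : ℚ :=
  (∑ v ∈ H, (deg H v : ℚ)) / (H.card : ℚ)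

/-- The Natarajan dimension of `H ⊆ [p]^n`: the largest `m` such that some `m` coordinates
are N-shattered, i.e. there are `f, g` disagreeing everywhere all of whose mixed patterns
appear in the projection. -/
noncomputable def natDim {n p : ℕ} (H : Finset (Fin n → Fin p)) : ℕ :=
  sSup {m | ∃ S : Fin m → Fin n, ∃ f g : Fin m → Fin p, (∀ j, f j ≠ g j) ∧
    ∀ b : Fin m → Bool, (fun j => if b j then f j else g j) ∈ projF H S}

/-- For `p ≥ 2`, the exponential dimension is at most `5·d_N·log₂ p`. -/
def NShat {m p : ℕ} (F : Finset (Fin m → Fin p)) (t : ℕ) : Prop :=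
  ∃ S : Fin t → Fin m, ∃ f g : Fin t → Fin p, (∀ j, f j ≠ g j) ∧
    ∀ b : Fin t → Bool, ∃ h ∈ F, ∀ j, h (S j) = if b j then f j else g j

lemma nshat_zero {m p : ℕ} {F : Finset (Fin m → Fin p)} (hF : F.Nonempty) : NShat F 0 := by
  obtain ⟨h, hh⟩ := hF
  exact ⟨Fin.elim0, Fin.elim0, Fin.elim0, fun j => j.elim0, fun b => ⟨h, hh, fun j => j.elim0⟩⟩

lemma card_eq_zero_of_not_nshat {m p : ℕ} {F : Finset (Fin m → Fin p)} (h : ¬ NShat F 0) :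
    F = ∅ := by
  by_contra hne
  exact h (nshat_zero (Finset.nonempty_iff_ne_empty.2 hne))

-- projection lemma
lemma nshat_of_image_init {m p t : ℕ} {F : Finset (Fin (m+1) → Fin p)}
    (h : NShat (F.image Fin.init) t) : NShat F t := by
  obtain ⟨S, f, g, hfg, hb⟩ := h
  refine ⟨fun j => (S j).castSucc, f, g, hfg, fun b => ?_⟩
  obtain ⟨x, hx, hxb⟩ := hb b
  obtain ⟨h, hh, rfl⟩ := Finset.mem_image.1 hx
  exact ⟨h, hh, fun j => hxb j⟩

-- edge lemma
lemma nshat_succ_of_pair {m p d : ℕ} {F : Finset (Fin (m+1) → Fin p)} {a b : Fin p}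
    (hab : a ≠ b) {G : Finset (Fin m → Fin p)}
    (hG : ∀ g ∈ G, Fin.snoc g a ∈ F ∧ Fin.snoc g b ∈ F)
    (h : NShat G d) : NShat F (d+1) := by
  obtain ⟨S, f, g, hfg, hb⟩ := h
  refine ⟨Fin.snoc (fun j => (S j).castSucc) (Fin.last m), Fin.snoc f a, Fin.snoc g b, ?_, ?_⟩
  · intro j
    induction j using Fin.lastCases with
    | last => simpa using hab
    | cast j => simpa using hfg j
  · intro b'
    obtain ⟨x, hx, hxb⟩ := hb (fun j => b' j.castSucc)
    obtain ⟨hxa, hxb'⟩ := hG x hx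
    refine ⟨Fin.snoc x (if b' (Fin.last d) then a else b), by split <;> assumption, ?_⟩
    intro j
    induction j using Fin.lastCases with
    | last => simp
    | cast j => simpa using hxb j

section counting
variable {m p : ℕ} (F : Finset (Fin (m+1) → Fin p))

def fiberV (g : Fin m → Fin p) : Finset (Fin p) :=
  Finset.univ.filter (fun v => Fin.snoc g v ∈ F)

lemma card_eq_sum_fiber :
    F.card = ∑ g ∈ F.image Fin.init, (fiberV F g).card := by
  rw [Finset.card_eq_sum_card_fiberwise (f := Fin.init) (t := F.image Fin.init)
    (fun x hx => Finset.mem_image_of_mem _ hx)]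
  refine Finset.sum_congr rfl (fun g hg => ?_)
  rw [show F.filter (fun h => Fin.init h = g) = (fiberV F g).image (Fin.snoc g) from ?_]
  · rw [Finset.card_image_of_injective]
    intro v w hvw
    have := congrFun hvw (Fin.last m)
    simpa using this
  · ext h
    simp only [Finset.mem_filter, Finset.mem_image, fiberV, Finset.mem_univ, true_and]
    constructor
    · rintro ⟨hh, rfl⟩
      exact ⟨h (Fin.last m), by simpa [Fin.snoc_init_self] using hh, Fin.snoc_init_self h⟩
    · rintro ⟨v, hv, rfl⟩
      constructor
      · exact hv
      · funext j; simp [Fin.init]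

lemma fiber_offdiag_sum :
    ∑ g ∈ F.image Fin.init, (fiberV F g).offDiag.card
      = ∑ ab ∈ (Finset.univ : Finset (Fin p)).offDiag,
          ((F.image Fin.init).filter
            (fun g => Fin.snoc g ab.1 ∈ F ∧ Fin.snoc g ab.2 ∈ F)).card := by
  have h1 : ∀ g : Fin m → Fin p, (fiberV F g).offDiag
      = (Finset.univ : Finset (Fin p)).offDiag.filter
          (fun ab => Fin.snoc g ab.1 ∈ F ∧ Fin.snoc g ab.2 ∈ F) := by
    intro g
    ext ⟨x, y⟩
    simp only [Finset.mem_offDiag, Finset.mem_filter, fiberV, Finset.mem_univ, true_and]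
    tauto
  simp only [h1, Finset.card_filter]
  rw [Finset.sum_comm]

end counting

lemma two_choose_two (P : ℕ) : 2 * P.choose 2 = P * P - P := by
  induction P with
  | zero => rfl
  | succ Q ih =>
    have h1 : (Q+1).choose 2 = Q.choose 1 + Q.choose 2 := Nat.choose_succ_succ Q 1
    have h2 : Q.choose 1 = Q := Nat.choose_one_right Q
    have hQ : Q ≤ Q * Q := by
      cases Q with
      | zero => simp
      | succ R => exact Nat.le_mul_of_pos_left _ (by positivity)
    have hring : (Q+1) * (Q+1) = Q*Q + 2*Q + 1 := by ring
    omega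

lemma two_mul_le_offdiag (t : ℕ) : 2 * t ≤ 2 + (t * t - t) := by
  rcases Nat.lt_or_ge t 3 with h | h
  · interval_cases t <;> simp
  · have h3 : 3 * t ≤ t * t := Nat.mul_le_mul_right t h
    omega

lemma phi_pascal (m d q : ℕ) :
    ∑ i ∈ Finset.range (d+1), (m+1).choose i * q^i
      = ∑ i ∈ Finset.range (d+1), m.choose i * q^i
        + q * ∑ i ∈ Finset.range d, m.choose i * q^i := by
  induction d with
  | zero => simp
  | succ d ih =>
    rw [Finset.sum_range_succ (fun i => (m+1).choose i * q^i),
        Finset.sum_range_succ (fun i => m.choose i * q^i),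
        Finset.sum_range_succ (fun i => m.choose i * q^i) (n := d)]
    have h1 : (m+1).choose (d+1) * q^(d+1)
        = m.choose (d+1) * q^(d+1) + q * (m.choose d * q^d) := by
      rw [Nat.choose_succ_succ, add_mul, pow_succ]; ring
    rw [ih, h1, Finset.sum_range_succ (fun i => m.choose i * q^i) d]
    ring

lemma hl (p : ℕ) : ∀ m (F : Finset (Fin m → Fin p)) (t : ℕ), ¬ NShat F t →
    F.card ≤ ∑ i ∈ Finset.range t, m.choose i * (p.choose 2)^i := by
  intro m
  induction m with
  | zero =>
    intro F t hF
    cases t with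
    | zero => simp [card_eq_zero_of_not_nshat hF]
    | succ d =>
      have hcard : F.card ≤ 1 := by
        refine Finset.card_le_one.2 (fun a _ b _ => ?_)
        funext j; exact j.elim0
      calc F.card ≤ 1 := hcard
        _ ≤ _ := by
          have := Finset.single_le_sum
            (f := fun i => Nat.choose 0 i * (p.choose 2)^i)
            (fun i _ => Nat.zero_le _) (Finset.mem_range.2 (Nat.succ_pos d))
          simpa using this
  | succ m ih =>
    intro F t hF
    cases t with
    | zero => simp [card_eq_zero_of_not_nshat hF]
    | succ d =>
      set q := p.choose 2 with hq
      set F' := F.image Fin.init with hF'def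
      have h1 : F'.card ≤ ∑ i ∈ Finset.range (d+1), m.choose i * q^i :=
        ih F' (d+1) (fun h => hF (nshat_of_image_init h))
      have h2 : ∀ ab ∈ (Finset.univ : Finset (Fin p)).offDiag,
          ((F'.filter (fun g => Fin.snoc g ab.1 ∈ F ∧ Fin.snoc g ab.2 ∈ F)).card
            ≤ ∑ i ∈ Finset.range d, m.choose i * q^i) := by
        rintro ⟨a, b⟩ hab
        simp only [Finset.mem_offDiag] at hab
        refine ih _ d (fun h => hF ?_)
        exact nshat_succ_of_pair hab.2.2
          (fun g hg => (Finset.mem_filter.1 hg).2) h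
      -- counting
      have hcount : 2 * F.card ≤ 2 * F'.card
          + ∑ ab ∈ (Finset.univ : Finset (Fin p)).offDiag,
              ((F'.filter (fun g => Fin.snoc g ab.1 ∈ F ∧ Fin.snoc g ab.2 ∈ F)).card) := by
        rw [← fiber_offdiag_sum, card_eq_sum_fiber (F := F), Finset.mul_sum, ← hF'def]
        have hrw : 2 * F'.card + ∑ g ∈ F', (fiberV F g).offDiag.card
            = ∑ g ∈ F', (2 + (fiberV F g).offDiag.card) := by
          rw [Finset.sum_add_distrib, Finset.sum_const, smul_eq_mul, mul_comm]
        rw [hrw]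
        refine Finset.sum_le_sum (fun g _ => ?_)
        rw [Finset.offDiag_card]
        exact two_mul_le_offdiag _
      have hsum : ∑ ab ∈ (Finset.univ : Finset (Fin p)).offDiag,
          ((F'.filter (fun g => Fin.snoc g ab.1 ∈ F ∧ Fin.snoc g ab.2 ∈ F)).card)
            ≤ (2 * q) * ∑ i ∈ Finset.range d, m.choose i * q^i := by
        calc _ ≤ ∑ _ab ∈ (Finset.univ : Finset (Fin p)).offDiag,
              ∑ i ∈ Finset.range d, m.choose i * q^i := Finset.sum_le_sum h2
          _ = (Finset.univ : Finset (Fin p)).offDiag.card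
              * ∑ i ∈ Finset.range d, m.choose i * q^i := by
                rw [Finset.sum_const, smul_eq_mul]
          _ = (2 * q) * ∑ i ∈ Finset.range d, m.choose i * q^i := by
                rw [Finset.offDiag_card, Finset.card_univ, Fintype.card_fin, hq,
                  ← two_choose_two]
      have hfin : 2 * F.card ≤ 2 * (∑ i ∈ Finset.range (d+1), (m+1).choose i * q^i) := by
        rw [phi_pascal]
        have e1 : (2*q) * (∑ i ∈ Finset.range d, m.choose i * q^i)
            = 2 * (q * ∑ i ∈ Finset.range d, m.choose i * q^i) := by ring
        omega
      omega

lemma numeric {k d p : ℕ} (hp : 2 ≤ p)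
    (h : 2^k ≤ ∑ i ∈ Finset.range (d+1), k.choose i * (p.choose 2)^i) :
    (k : ℝ) ≤ 5 * d * Real.logb 2 p := by
  have hp1 : (1:ℝ) < p := by exact_mod_cast hp.trans_lt' one_lt_two
  have hlp : Real.log 2 ≤ Real.log p := Real.log_le_log (by norm_num) (by exact_mod_cast hp)
  have hl2 : (0.6931471803 : ℝ) < Real.log 2 := Real.log_two_gt_d9
  have hL : (1:ℝ) ≤ Real.logb 2 p := by
    rw [Real.logb, le_div_iff₀ (by linarith)]
    linarith
  by_cases hkd : k ≤ 5 * d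
  · calc (k:ℝ) ≤ 5 * d := by exact_mod_cast hkd
      _ = 5 * d * 1 := by ring
      _ ≤ 5 * d * Real.logb 2 p := by
        apply mul_le_mul_of_nonneg_left hL; positivity
  · push_neg at hkd
    rcases Nat.eq_zero_or_pos d with rfl | hd
    · simp at h
      have : 2 ≤ 2^k := by
        calc 2 = 2^1 := rfl
          _ ≤ 2^k := Nat.pow_le_pow_right (by norm_num) (by omega)
      omega
    -- now 1 ≤ d, 5d < k
    set q := p.choose 2 with hqdef
    have hq1 : 1 ≤ q := Nat.choose_pos hp
    have hk6 : 6 ≤ k := by omega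
    have hdk : d < k := by omega
    have hk0 : (0:ℝ) < k := by exact_mod_cast Nat.pos_of_ne_zero (by omega)
    have hd0 : (0:ℝ) < d := by exact_mod_cast hd
    have hq0 : (0:ℝ) < q := by exact_mod_cast hq1
    set x : ℝ := (d:ℝ)/(k:ℝ) with hxdef
    have hx0 : 0 < x := by positivity
    have hx1 : x ≤ 1 := by
      rw [hxdef, div_le_one hk0]
      exact_mod_cast hdk.le
    have hsum : (2:ℝ)^k ≤ ∑ i ∈ Finset.range (d+1), (k.choose i : ℝ) * (q:ℝ)^i := by
      have := h
      push_cast at *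
      exact_mod_cast h
    have step1 : ∑ i ∈ Finset.range (d+1), (k.choose i : ℝ) * (q:ℝ)^i
        ≤ (q:ℝ)^d * ∑ i ∈ Finset.range (d+1), (k.choose i : ℝ) := by
      rw [Finset.mul_sum]
      refine Finset.sum_le_sum (fun i hi => ?_)
      have hiq : (q:ℝ)^i ≤ (q:ℝ)^d :=
        pow_le_pow_right₀ (by exact_mod_cast hq1) (Nat.lt_succ_iff.1 (Finset.mem_range.1 hi))
      calc (k.choose i : ℝ) * (q:ℝ)^i ≤ (k.choose i : ℝ) * (q:ℝ)^d :=
            mul_le_mul_of_nonneg_left hiq (by positivity)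
        _ = (q:ℝ)^d * (k.choose i : ℝ) := by ring
    have step2 : (∑ i ∈ Finset.range (d+1), (k.choose i : ℝ)) * x^d ≤ (1+x)^k := by
      calc (∑ i ∈ Finset.range (d+1), (k.choose i : ℝ)) * x^d
          = ∑ i ∈ Finset.range (d+1), (k.choose i : ℝ) * x^d := by rw [Finset.sum_mul]
        _ ≤ ∑ i ∈ Finset.range (d+1), (k.choose i : ℝ) * x^i := by
            refine Finset.sum_le_sum (fun i hi => ?_)
            exact mul_le_mul_of_nonneg_left
              (pow_le_pow_of_le_one hx0.le hx1 (Nat.lt_succ_iff.1 (Finset.mem_range.1 hi)))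
              (by positivity)
        _ ≤ ∑ i ∈ Finset.range (k+1), (k.choose i : ℝ) * x^i := by
            refine Finset.sum_le_sum_of_subset_of_nonneg
              (Finset.range_subset_range.2 (by omega)) (fun i _ _ => by positivity)
        _ = (x+1)^k := by
            rw [add_pow]
            refine Finset.sum_congr rfl (fun i hi => by ring)
        _ = (1+x)^k := by ring
    have step3 : (1+x)^k ≤ Real.exp d := by
      calc (1+x)^k ≤ (Real.exp x)^k := by
            refine pow_le_pow_left₀ (by positivity) ?_ k
            linarith [Real.add_one_le_exp x]
        _ = Real.exp (x * k) := by rw [← Real.exp_nat_mul]; ring_nf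
        _ = Real.exp d := by
            congr 1
            rw [hxdef]
            field_simp
    -- combine: 2^k * x^d ≤ q^d * exp d
    have hmain : (2:ℝ)^k * x^d ≤ (q:ℝ)^d * Real.exp d := by
      calc (2:ℝ)^k * x^d ≤ ((q:ℝ)^d * ∑ i ∈ Finset.range (d+1), (k.choose i : ℝ)) * x^d := by
            refine mul_le_mul_of_nonneg_right (hsum.trans step1) (by positivity)
        _ = (q:ℝ)^d * ((∑ i ∈ Finset.range (d+1), (k.choose i : ℝ)) * x^d) := by ring
        _ ≤ (q:ℝ)^d * Real.exp d :=
            mul_le_mul_of_nonneg_left (step2.trans step3) (by positivity)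
    have hlog : (k:ℝ) * Real.log 2 + d * (Real.log d - Real.log k)
        ≤ d * Real.log q + d := by
      have h1 : Real.log ((2:ℝ)^k * x^d) ≤ Real.log ((q:ℝ)^d * Real.exp d) :=
        Real.log_le_log (by positivity) hmain
      rw [Real.log_mul (by positivity) (by positivity),
          Real.log_mul (by positivity) (Real.exp_ne_zero _)] at h1
      simp only [Real.log_pow, Real.log_exp] at h1
      rw [hxdef, Real.log_div (by positivity) (by positivity)] at h1
      push_cast at h1 ⊢
      linarith
    -- log q ≤ 2 log p - log 2
    have hq2 : Real.log q ≤ 2 * Real.log p - Real.log 2 := by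
      have hqp : (2:ℝ) * q ≤ (p:ℝ)^2 := by
        have := two_choose_two p
        have h2 : 2 * q ≤ p * p := by omega
        push_cast
        calc (2:ℝ) * q = ((2 * q : ℕ) : ℝ) := by push_cast; ring
          _ ≤ ((p * p : ℕ) : ℝ) := by exact_mod_cast h2
          _ = (p:ℝ)^2 := by push_cast; ring
      have : Real.log q ≤ Real.log ((p:ℝ)^2 / 2) := by
        apply Real.log_le_log hq0
        linarith
      rw [Real.log_div (by positivity) (by norm_num), Real.log_pow] at this
      push_cast at this
      linarith
    -- log k - log d ≤ log 5 + k/(5d) - 1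
    have hr : Real.log k - Real.log d ≤ Real.log 5 + (k/(5*d) - 1) := by
      have h1 : Real.log ((k:ℝ)/d / 5) ≤ (k:ℝ)/d/5 - 1 :=
        Real.log_le_sub_one_of_pos (by positivity)
      rw [Real.log_div (by positivity) (by norm_num),
          Real.log_div (by positivity) (by positivity)] at h1
      have : (k:ℝ)/d/5 = k/(5*d) := by ring
      linarith [this ▸ h1]
    have hr' : (d:ℝ) * (Real.log k - Real.log d) ≤ d * Real.log 5 + k/5 - d := by
      have h2 := mul_le_mul_of_nonneg_left hr hd0.le
      have hdne : (d:ℝ) ≠ 0 := hd0.ne'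
      have hexp : (d:ℝ) * (Real.log 5 + ((k:ℝ)/(5*d) - 1)) = d * Real.log 5 + k/5 - d := by
        field_simp
        ring
      linarith
    have h52 : Real.log 5 - Real.log 2 < 1 := by
      have h1 : Real.log 5 - Real.log 2 = Real.log (5/2) := by
        rw [Real.log_div (by norm_num) (by norm_num)]
      have h2 : Real.log ((5:ℝ)/2) < Real.log (Real.exp 1) := by
        apply Real.log_lt_log (by norm_num)
        linarith [Real.exp_one_gt_d9]
      rw [Real.log_exp] at h2
      linarith
    -- final contradiction
    by_contra hcon
    push_neg at hcon
    have hcon2 : 5 * (d:ℝ) * Real.log p < k * Real.log 2 := by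
      rw [Real.logb] at hcon
      have hl2' : (0:ℝ) < Real.log 2 := by linarith
      calc 5 * (d:ℝ) * Real.log p = (5 * d * (Real.log p / Real.log 2)) * Real.log 2 := by
            field_simp
        _ < k * Real.log 2 := by
            exact mul_lt_mul_of_pos_right hcon hl2'
    have hd5 : (d:ℝ) < k/5 := by
      nlinarith
    nlinarith [mul_le_mul_of_nonneg_left hlp hd0.le]

-- membership in the natDim index set
lemma nat_set_le {n p m : ℕ} {H : Finset (Fin n → Fin p)}
    (hm : ∃ S : Fin m → Fin n, ∃ f g : Fin m → Fin p, (∀ j, f j ≠ g j) ∧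
      ∀ b : Fin m → Bool, (fun j => if b j then f j else g j) ∈ projF H S) :
    m ≤ n := by
  obtain ⟨S, f, g, hfg, hall⟩ := hm
  have hinj : Function.Injective S := by
    intro j1 j2 hS
    by_contra hne
    have h1 := hall (fun _ => true)
    have h2 := hall (fun j => if j = j2 then false else true)
    obtain ⟨h, _, hh⟩ := Finset.mem_image.1 h1
    obtain ⟨h', _, hh'⟩ := Finset.mem_image.1 h2
    have e1 : f j1 = f j2 := by
      have a1 := congrFun hh j1
      have a2 := congrFun hh j2
      simp only [if_true] at a1 a2
      rw [← a1, ← a2, hS]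
    have e2 : f j1 = g j2 := by
      have a1 := congrFun hh' j1
      have a2 := congrFun hh' j2
      simp only [if_neg hne, if_pos rfl] at a1
      simp only [if_pos rfl] at a2
      simp only [if_true, Bool.false_eq_true, if_false] at a1 a2
      rw [← a1, ← a2, hS]
    exact hfg j2 (e1.symm.trans e2)
  simpa using Fintype.card_le_of_injective S hinj

lemma nshat_proj_mem {n p k t : ℕ} {H : Finset (Fin n → Fin p)} {S : Fin k → Fin n}
    (h : NShat (projF H S) t) :
    ∃ S' : Fin t → Fin n, ∃ f g : Fin t → Fin p, (∀ j, f j ≠ g j) ∧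
      ∀ b : Fin t → Bool, (fun j => if b j then f j else g j) ∈ projF H S' := by
  obtain ⟨S₀, f, g, hfg, hb⟩ := h
  refine ⟨fun j => S (S₀ j), f, g, hfg, fun b => ?_⟩
  obtain ⟨x, hx, hxb⟩ := hb b
  obtain ⟨h₀, hh₀, rfl⟩ := Finset.mem_image.1 hx
  exact Finset.mem_image.2 ⟨h₀, hh₀, funext (fun j => hxb j)⟩

theorem dE_le_five_natDim_logb {n p : ℕ} (H : Finset (Fin n → Fin p)) (hp : 2 ≤ p) :
    (dE H : ℝ) ≤ 5 * (natDim H : ℝ) * Real.logb 2 (p : ℝ) := by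
  unfold dE natDim EShatters
  have hlogb : (0:ℝ) ≤ Real.logb 2 p :=
    Real.logb_nonneg (by norm_num) (by exact_mod_cast hp.trans' (by norm_num))
  set ES := {k | ∃ S : Fin k → Fin n, 2 ^ k ≤ (projF H S).card} with hES
  set NS := {m | ∃ S : Fin m → Fin n, ∃ f g : Fin m → Fin p, (∀ j, f j ≠ g j) ∧
          ∀ b : Fin m → Bool, (fun j => if b j then f j else g j) ∈ projF H S} with hNS
  rcases Set.eq_empty_or_nonempty ES with he | hne
  · rw [he, csSup_empty]
    have h0 : ((⊥ : ℕ) : ℝ) = 0 := by norm_num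
    rw [h0]
    exact mul_nonneg (by positivity) hlogb
  · have hbddE : BddAbove ES := by
      refine ⟨H.card, fun k hk => ?_⟩
      obtain ⟨S, hS⟩ := hk
      have h1 : (projF H S).card ≤ H.card := Finset.card_image_le
      have h2 : k < 2^k := Nat.lt_two_pow_self
      omega
    have hbddN : BddAbove NS := ⟨n, fun m hm => nat_set_le hm⟩
    set k := sSup ES with hk
    set d := sSup NS with hd
    obtain ⟨S0, hS0⟩ := Nat.sSup_mem hne hbddE
    have hnot : ¬ NShat (projF H S0) (d + 1) := by
      intro hsh
      have hmem : (d + 1) ∈ NS := nshat_proj_mem hsh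
      have := le_csSup hbddN hmem
      omega
    have hcard := hl p k (projF H S0) (d+1) hnot
    exact numeric hp (hS0.trans hcard)
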